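/- If H ∈ 𝔄 is reflection invariant, Θ(H) = H, then the partition sum Z_H = Tr(e^{−H}) is real. -/

import Mathlib

open ComplexOrder

noncomputable section

/-- The setting of the paper: a finite set `Λ` with a fixed-point free involution `ϑ`
exchanging `Λp` and its complement, the Clifford algebra (algebra of Majoranas) `carrier`
with self-adjoint generators `c i`, the global gauge automorphism `gauge`, the antilinear
reflection `*`-automorphism `Θ`, a square root `ζ` of `-1`, the twisted product `twist`,
a choice `P` of orderings of the subsets of `Λp` (giving the bases
`{C J : J ∈ P}` of `𝔄₊` and `{Θ(C J) ∘ C J' : J, J' ∈ P}` of `𝔄`),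
and the tracial state `Tr` picking out the coefficient of `1` in the basis expansion. -/
structure MajoranaSetting where
  Λ : Type
  [fintypeΛ : Fintype Λ]
  [deceqΛ : DecidableEq Λ]
  ϑ : Λ → Λ
  ϑ_invol : Function.Involutive ϑ
  ϑ_fixfree : ∀ i, ϑ i ≠ i
  Λp : Finset Λ
  ϑ_exch : ∀ i, i ∈ Λp ↔ ϑ i ∉ Λp
  carrier : Type
  [nring : NormedRing carrier]
  [nalg : NormedAlgebra ℂ carrier]
  [cmpl : CompleteSpace carrier]
  [starring : StarRing carrier]
  [starmod : StarModule ℂ carrier]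
  c : Λ → carrier
  c_star : ∀ i, star (c i) = c i
  clifford : ∀ i j, c i * c j + c j * c i = if i = j then (2 : carrier) else 0
  gauge : carrier ≃ₐ[ℂ] carrier
  gauge_c : ∀ i, gauge (c i) = - c i
  Θ : carrier → carrier
  Θ_add : ∀ x y, Θ (x + y) = Θ x + Θ y
  Θ_smul : ∀ (z : ℂ) (x), Θ (z • x) = (starRingEnd ℂ z) • Θ x
  Θ_mul : ∀ x y, Θ (x * y) = Θ x * Θ y
  Θ_star : ∀ x, Θ (star x) = star (Θ x)
  Θ_invol : ∀ x, Θ (Θ x) = x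
  Θ_c : ∀ i, Θ (c i) = c (ϑ i)
  ζ : ℂ
  ζ_sq : ζ ^ 2 = -1
  twist : carrier → carrier → carrier
  twist_add_left : ∀ x x' y, twist (x + x') y = twist x y + twist x' y
  twist_add_right : ∀ x y y', twist x (y + y') = twist x y + twist x y'
  twist_smul_left : ∀ (z : ℂ) (x y), twist (z • x) y = z • twist x y
  twist_smul_right : ∀ (z : ℂ) (x y), twist x (z • y) = z • twist x y
  twist_spec : ∀ (Am Ap Bm Bp : carrier) (a b a' b' : ℕ),
    a ≤ 1 → b ≤ 1 → a' ≤ 1 → b' ≤ 1 →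
    Am ∈ Algebra.adjoin ℂ (c '' {i | i ∉ Λp}) →
    Ap ∈ Algebra.adjoin ℂ (c '' {i | i ∈ Λp}) →
    Bm ∈ Algebra.adjoin ℂ (c '' {i | i ∉ Λp}) →
    Bp ∈ Algebra.adjoin ℂ (c '' {i | i ∈ Λp}) →
    gauge Am = ((-1 : ℂ) ^ a) • Am →
    gauge Ap = ((-1 : ℂ) ^ b) • Ap →
    gauge Bm = ((-1 : ℂ) ^ a') • Bm →
    gauge Bp = ((-1 : ℂ) ^ b') • Bp →
    twist (Am * Ap) (Bm * Bp)
      = ζ ^ ((a * b' : ℤ) - (b * a' : ℤ)) • (Am * Ap * (Bm * Bp))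
  P : Finset (List Λ)
  P_nodup : ∀ J ∈ P, J.Nodup
  P_sub : ∀ J ∈ P, ∀ i ∈ J, i ∈ Λp
  P_unique : ∀ s : Finset Λ, s ⊆ Λp → ∃! J, J ∈ P ∧ J.toFinset = s
  Tr : carrier →ₗ[ℂ] ℂ
  Tr_basis : ∀ J ∈ P, ∀ J' ∈ P,
    Tr (twist (Θ ((J.map c).prod)) ((J'.map c).prod))
      = if J = [] ∧ J' = [] then 1 else 0
  basis_indep : LinearIndependent ℂ
    (fun p : {J // J ∈ P} × {J // J ∈ P} =>
      twist (Θ ((p.1.1.map c).prod)) ((p.2.1.map c).prod))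
  basis_span : ∀ x : carrier, x ∈ Submodule.span ℂ
    (Set.range fun p : {J // J ∈ P} × {J // J ∈ P} =>
      twist (Θ ((p.1.1.map c).prod)) ((p.2.1.map c).prod))
  plus_span : ∀ x ∈ Algebra.adjoin ℂ (c '' {i | i ∈ Λp}),
    x ∈ Submodule.span ℂ (Set.range fun J : {J // J ∈ P} => ((J.1.map c).prod))

attribute [instance] MajoranaSetting.fintypeΛ MajoranaSetting.deceqΛ
  MajoranaSetting.nring MajoranaSetting.nalg MajoranaSetting.cmpl
  MajoranaSetting.starring MajoranaSetting.starmod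

namespace MajoranaSetting

variable (S : MajoranaSetting)

/-- The subalgebra `𝔄₊` generated by the Majoranas on the `+` side. -/
def Aplus : Subalgebra ℂ S.carrier := Algebra.adjoin ℂ (S.c '' {i | i ∈ S.Λp})

/-- The subalgebra `𝔄₋` generated by the Majoranas on the `-` side. -/
def Aminus : Subalgebra ℂ S.carrier := Algebra.adjoin ℂ (S.c '' {i | i ∉ S.Λp})

/-- The monomial `C_𝔍 = c_{i₁} ⋯ c_{i_k}`. -/
def C (J : List S.Λ) : S.carrier := (J.map S.c).prod

/-- `q_𝔍 = (-1)^{k(k-1)/2}`. -/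
def q (J : List S.Λ) : ℂ := (-1 : ℂ) ^ (J.length * (J.length - 1) / 2)

/-- `s_𝔍 = ζ^{k(k-1)/2}`. -/
def sgn (J : List S.Λ) : ℂ := S.ζ ^ (J.length * (J.length - 1) / 2)

/-- The exponential `e^x` in the (finite-dimensional) algebra `𝔄`. -/
def expm (x : S.carrier) : S.carrier := NormedSpace.exp x

/-- The Hamiltonian `H = -∑_{𝔍,𝔍' ∈ 𝒫₊} J_{𝔍𝔍'} Θ(C_𝔍) ∘ C_𝔍'`
determined by coupling constants `Jc`. -/
def Ham (Jc : List S.Λ → List S.Λ → ℂ) : S.carrier :=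
  - ∑ J ∈ S.P, ∑ J' ∈ S.P, Jc J J' • S.twist (S.Θ (S.C J)) (S.C J')

/-- The index type of the basis `{C J : J ∈ 𝒫₊}`. -/
abbrev PIdx := {J : List S.Λ // J ∈ S.P}

/-- The index type `𝒫₊ - {∅}` of couplings across the reflection plane. -/
abbrev PIdx0 := {p : S.PIdx // p.1 ≠ []}

/-- The full matrix of coupling constants. -/
def Jmat (Jc : List S.Λ → List S.Λ → ℂ) : Matrix S.PIdx S.PIdx ℂ :=
  Matrix.of fun p q => Jc p.1 q.1

/-- The matrix `J⁰` of coupling constants across the reflection plane. -/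
def Jmat0 (Jc : List S.Λ → List S.Λ → ℂ) : Matrix S.PIdx0 S.PIdx0 ℂ :=
  Matrix.of fun p q => Jc p.1.1 q.1.1

/-! ### Auxiliary lemmas -/

lemma Θ_zero : S.Θ 0 = 0 := by
  have h := S.Θ_add 0 0
  rw [add_zero] at h
  have h2 : S.Θ 0 + S.Θ 0 = S.Θ 0 + 0 := by rw [add_zero]; exact h.symm
  exact add_left_cancel h2

lemma Θ_one : S.Θ 1 = 1 := by
  have h := S.Θ_mul 1 (S.Θ 1)
  rw [one_mul, S.Θ_invol, mul_one] at h
  exact h.symm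

lemma Θ_neg (x : S.carrier) : S.Θ (-x) = - S.Θ x := by
  have h := S.Θ_add x (-x)
  rw [add_neg_cancel, S.Θ_zero] at h
  exact (neg_eq_of_add_eq_zero_right h.symm).symm

lemma Θ_pow (x : S.carrier) (n : ℕ) : S.Θ (x ^ n) = (S.Θ x) ^ n := by
  induction n with
  | zero => simpa using S.Θ_one
  | succ n ih => rw [pow_succ, S.Θ_mul, ih, pow_succ]

lemma c_anticomm {i j : S.Λ} (h : i ≠ j) : S.c i * S.c j = - (S.c j * S.c i) := by
  have hc := S.clifford i j
  rw [if_neg h] at hc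
  exact eq_neg_of_add_eq_zero_left hc

/-- A single generator anticommutes through a product of generators at distinct sites. -/
lemma c_prod_comm (i : S.Λ) (M : List S.Λ) (h : ∀ j ∈ M, i ≠ j) :
    S.c i * (M.map S.c).prod
      = ((-1 : ℂ) ^ M.length) • ((M.map S.c).prod * S.c i) := by
  induction M with
  | nil => simp
  | cons j M ih =>
    have hij : i ≠ j := h j (List.mem_cons_self)
    have ihm := ih (fun k hk => h k (List.mem_cons_of_mem j hk))
    simp only [List.map_cons, List.prod_cons, List.length_cons]
    rw [← mul_assoc, S.c_anticomm hij, neg_mul, mul_assoc, ihm, mul_smul_comm,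
      pow_succ, mul_comm ((-1 : ℂ) ^ M.length) (-1), neg_one_mul, neg_smul,
      mul_assoc]

/-- Products of generators at pairwise distinct sites commute up to the sign
`(-1)^{|L||M|}`. -/
lemma prod_prod_comm (L M : List S.Λ) (h : ∀ i ∈ L, ∀ j ∈ M, i ≠ j) :
    (L.map S.c).prod * (M.map S.c).prod
      = ((-1 : ℂ) ^ (L.length * M.length)) • ((M.map S.c).prod * (L.map S.c).prod) := by
  induction L with
  | nil => simp
  | cons i L ih =>
    have hi : ∀ j ∈ M, i ≠ j := h i (List.mem_cons_self)
    have ihm := ih (fun k hk => h k (List.mem_cons_of_mem i hk))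
    simp only [List.map_cons, List.prod_cons, List.length_cons]
    rw [mul_assoc, ihm, mul_smul_comm, ← mul_assoc, S.c_prod_comm i M hi, smul_mul_assoc,
      smul_smul, mul_assoc, succ_nsmul_length_helper]
where
  succ_nsmul_length_helper : ∀ (a b : ℕ),
      ((-1 : ℂ) ^ (a * b)) * ((-1 : ℂ) ^ b) = (-1 : ℂ) ^ ((a + 1) * b) := by
    intro a b
    rw [← pow_add, add_mul, one_mul]

lemma Θ_C (J : List S.Λ) : S.Θ (S.C J) = S.C (J.map S.ϑ) := by
  induction J with
  | nil => simpa [C] using S.Θ_one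
  | cons i J ih =>
    simp only [C, List.map_cons, List.prod_cons] at *
    rw [S.Θ_mul, S.Θ_c, ih]

lemma gauge_C (J : List S.Λ) :
    S.gauge (S.C J) = ((-1 : ℂ) ^ J.length) • S.C J := by
  induction J with
  | nil => simp [C]
  | cons i J ih =>
    simp only [C, List.map_cons, List.prod_cons, List.length_cons] at *
    rw [map_mul, S.gauge_c, ih, mul_smul_comm, neg_mul, smul_neg, pow_succ,
      mul_comm ((-1 : ℂ) ^ J.length) (-1), neg_one_mul, neg_smul]

lemma C_mem_plus (J : List S.Λ) (h : ∀ i ∈ J, i ∈ S.Λp) :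
    S.C J ∈ Algebra.adjoin ℂ (S.c '' {i | i ∈ S.Λp}) := by
  induction J with
  | nil => simpa [C] using one_mem (Algebra.adjoin ℂ (S.c '' {i | i ∈ S.Λp}))
  | cons i J ih =>
    simp only [C, List.map_cons, List.prod_cons] at *
    exact mul_mem (Algebra.subset_adjoin ⟨i, h i (List.mem_cons_self), rfl⟩)
      (ih fun j hj => h j (List.mem_cons_of_mem i hj))

lemma C_mem_minus (J : List S.Λ) (h : ∀ i ∈ J, i ∉ S.Λp) :
    S.C J ∈ Algebra.adjoin ℂ (S.c '' {i | i ∉ S.Λp}) := by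
  induction J with
  | nil => simpa [C] using one_mem (Algebra.adjoin ℂ (S.c '' {i | i ∉ S.Λp}))
  | cons i J ih =>
    simp only [C, List.map_cons, List.prod_cons] at *
    exact mul_mem (Algebra.subset_adjoin ⟨i, h i (List.mem_cons_self), rfl⟩)
      (ih fun j hj => h j (List.mem_cons_of_mem i hj))

/-- The twisted product of basic monomials is an explicit scalar multiple of the plain
product. -/
lemma twist_eq (J J' : List S.Λ) (hJ : ∀ i ∈ J, i ∈ S.Λp) (hJ' : ∀ i ∈ J', i ∈ S.Λp) :
    S.twist (S.Θ (S.C J)) (S.C J')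
      = S.ζ ^ ((J.length % 2 : ℤ) * (J'.length % 2 : ℤ)) • (S.Θ (S.C J) * S.C J') := by
  have hmem : S.Θ (S.C J) ∈ Algebra.adjoin ℂ (S.c '' {i | i ∉ S.Λp}) := by
    rw [S.Θ_C]
    refine S.C_mem_minus (J.map S.ϑ) ?_
    intro i hi
    obtain ⟨j, hj, rfl⟩ := List.mem_map.mp hi
    exact (S.ϑ_exch j).mp (hJ j hj)
  have hg1 : S.gauge (S.Θ (S.C J)) = ((-1 : ℂ) ^ (J.length % 2)) • S.Θ (S.C J) := by
    rw [S.Θ_C, S.gauge_C, List.length_map, ← neg_one_pow_eq_pow_mod_two]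
  have hg2 : S.gauge (S.C J') = ((-1 : ℂ) ^ (J'.length % 2)) • S.C J' := by
    rw [S.gauge_C, ← neg_one_pow_eq_pow_mod_two]
  have hone : (1 : S.carrier) ∈ Algebra.adjoin ℂ (S.c '' {i | i ∈ S.Λp}) := one_mem _
  have hone' : (1 : S.carrier) ∈ Algebra.adjoin ℂ (S.c '' {i | i ∉ S.Λp}) := one_mem _
  have hgl : S.gauge (1 : S.carrier) = ((-1 : ℂ) ^ (0 : ℕ)) • (1 : S.carrier) := by
    simp
  have h := S.twist_spec (S.Θ (S.C J)) 1 1 (S.C J')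
    (J.length % 2) 0 0 (J'.length % 2)
    (Nat.le_of_lt_succ (Nat.mod_lt _ (by norm_num))) (by norm_num) (by norm_num)
    (Nat.le_of_lt_succ (Nat.mod_lt _ (by norm_num)))
    hmem hone hone' (S.C_mem_plus J' hJ')
    hg1 hgl hgl hg2
  rw [mul_one, one_mul] at h
  rw [h]
  norm_num

lemma Tr_C_basis (J J' : List S.Λ) (hJ : J ∈ S.P) (hJ' : J' ∈ S.P) :
    S.Tr (S.twist (S.Θ (S.C J)) (S.C J'))
      = if J = [] ∧ J' = [] then 1 else 0 :=
  S.Tr_basis J hJ J' hJ'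

/-- Key computation: `Tr ∘ Θ` of a basis element is the conjugate of its trace. -/
lemma Tr_Θ_twist (J J' : List S.Λ) (hJ : J ∈ S.P) (hJ' : J' ∈ S.P) :
    S.Tr (S.Θ (S.twist (S.Θ (S.C J)) (S.C J')))
      = if J = [] ∧ J' = [] then 1 else 0 := by
  have hζ : S.ζ ≠ 0 := by
    intro h0
    have := S.ζ_sq
    rw [h0] at this
    norm_num at this
  have hJp : ∀ i ∈ J, i ∈ S.Λp := fun i hi => S.P_sub J hJ i hi
  have hJ'p : ∀ i ∈ J', i ∈ S.Λp := fun i hi => S.P_sub J' hJ' i hi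
  have h1 := S.twist_eq J J' hJp hJ'p
  have h2 := S.twist_eq J' J hJ'p hJp
  have h3 : S.Θ (S.twist (S.Θ (S.C J)) (S.C J'))
      = (starRingEnd ℂ (S.ζ ^ ((J.length % 2 : ℤ) * (J'.length % 2 : ℤ))))
          • (S.C J * S.Θ (S.C J')) := by
    rw [h1, S.Θ_smul, S.Θ_mul, S.Θ_invol]
  have h4 : S.C J * S.Θ (S.C J')
      = ((-1 : ℂ) ^ (J.length * J'.length)) • (S.Θ (S.C J') * S.C J) := by
    rw [S.Θ_C]
    have hdist : ∀ i ∈ J, ∀ j ∈ J'.map S.ϑ, i ≠ j := by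
      intro i hi j hj
      obtain ⟨j', hj', rfl⟩ := List.mem_map.mp hj
      intro hEq
      exact ((S.ϑ_exch j').mp (hJ'p j' hj')) (hEq ▸ hJp i hi)
    have hpp := S.prod_prod_comm J (J'.map S.ϑ) hdist
    simpa [C, List.length_map] using hpp
  have h5 : S.Θ (S.C J') * S.C J
      = (S.ζ ^ ((J'.length % 2 : ℤ) * (J.length % 2 : ℤ)))⁻¹
          • S.twist (S.Θ (S.C J')) (S.C J) := by
    rw [h2, smul_smul, inv_mul_cancel₀ (zpow_ne_zero _ hζ), one_smul]
  rw [h3, h4, h5, smul_smul, smul_smul, map_smul, S.Tr_C_basis J' J hJ' hJ, smul_eq_mul]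
  by_cases hc : J = [] ∧ J' = []
  · obtain ⟨e1, e2⟩ := hc
    subst e1; subst e2
    simp
  · have hc' : ¬(J' = [] ∧ J = []) := fun ⟨a, b⟩ => hc ⟨b, a⟩
    simp [hc, hc']

lemma finite_dim : FiniteDimensional ℂ S.carrier := by
  have hspan : Submodule.span ℂ
      (Set.range fun p : {J // J ∈ S.P} × {J // J ∈ S.P} =>
        S.twist (S.Θ ((p.1.1.map S.c).prod)) ((p.2.1.map S.c).prod)) = ⊤ :=
    eq_top_iff.mpr fun x _ => S.basis_span x
  exact ⟨hspan ▸ Submodule.fg_span (Set.finite_range _)⟩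

/-- `Θ` as a real-linear map. -/
noncomputable def ΘR : S.carrier →ₗ[ℝ] S.carrier where
  toFun := S.Θ
  map_add' := S.Θ_add
  map_smul' := fun r x => by
    simp only [RingHom.id_apply]
    rw [← Complex.coe_smul, S.Θ_smul, Complex.conj_ofReal, Complex.coe_smul]

lemma Θ_exp (x : S.carrier) :
    S.Θ (NormedSpace.exp x) = NormedSpace.exp (S.Θ x) := by
  haveI : FiniteDimensional ℂ S.carrier := S.finite_dim
  haveI : FiniteDimensional ℝ S.carrier := Module.Finite.trans ℂ S.carrier
  let L : S.carrier →L[ℝ] S.carrier := LinearMap.toContinuousLinearMap S.ΘR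
  have hL : ∀ y, L y = S.Θ y := fun y => rfl
  have hsum := NormedSpace.expSeries_summable' (𝕂 := ℂ) x
  rw [NormedSpace.exp_eq_tsum ℂ, ← hL, L.map_tsum hsum]
  refine tsum_congr fun n => ?_
  rw [hL, S.Θ_smul, S.Θ_pow]
  congr 1
  simp

/-- `Tr ∘ Θ` is the conjugate of `Tr`. -/
lemma Tr_Θ (x : S.carrier) : S.Tr (S.Θ x) = starRingEnd ℂ (S.Tr x) := by
  have hx := S.basis_span x
  induction hx using Submodule.span_induction with
  | mem y hy =>
    obtain ⟨⟨⟨J, hJ⟩, ⟨J', hJ'⟩⟩, rfl⟩ := hy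
    show S.Tr (S.Θ (S.twist (S.Θ (S.C J)) (S.C J')))
        = starRingEnd ℂ (S.Tr (S.twist (S.Θ (S.C J)) (S.C J')))
    rw [S.Tr_Θ_twist J J' hJ hJ', S.Tr_C_basis J J' hJ hJ']
    by_cases hc : J = [] ∧ J' = [] <;> simp [hc]
  | zero => rw [S.Θ_zero, map_zero, map_zero]
  | add a b _ _ ha hb => rw [S.Θ_add, map_add, ha, hb, map_add, map_add]
  | smul z a _ h =>
    rw [S.Θ_smul, map_smul, h, map_smul, smul_eq_mul, smul_eq_mul, map_mul]

end MajoranaSetting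

/-- if `Θ(H) = H` then the partition sum `Z_H = Tr(e^{-H})` is real. -/
theorem partition_sum_real (S : MajoranaSetting) (H : S.carrier) (hH : S.Θ H = H) :
    starRingEnd ℂ (S.Tr (S.expm (-H))) = S.Tr (S.expm (-H)) := by
  have h1 : S.Θ (S.expm (-H)) = S.expm (-H) := by
    rw [show S.expm (-H) = NormedSpace.exp (-H) from rfl, S.Θ_exp, S.Θ_neg, hH]
  rw [← S.Tr_Θ (S.expm (-H)), h1]
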